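/- arXiv:1104.2289 — 2 statements merged into one kernel-verified Lean document; each statement's English description precedes it below -/
import Mathlib

section
/- If a state ρ on ℂ^{d₁}⊗⋯⊗ℂ^{d_N} possesses a tensor positive S₁×⋯×S_N-setting source operator, then every quantum S₁×⋯×S_N-setting correlation scenario on ρ (specified by arbitrary POVMs M_n^{(s_n)} on ℂ^{d_n} with finite outcome sets) admits an LHV (local hidden variable) model. -/
open scoped ComplexOrder Matrix
open MeasureTheory ProbabilityTheory

namespace LqHV

/-- Entrywise tensor (Kronecker) product of a finite family of square complex matrices,
realized on the pi-type index. -/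
def tprod {ι : Type} [Fintype ι] [DecidableEq ι] {κ : ι → Type} [∀ i, Fintype (κ i)]
    (X : ∀ i, Matrix (κ i) (κ i) ℂ) : Matrix (∀ i, κ i) (∀ i, κ i) ℂ :=
  fun a b => ∏ i, X i (a i) (b i)

/-- Elementary (product) vector of a family of vectors. -/
def tvec {ι : Type} [Fintype ι] [DecidableEq ι] {κ : ι → Type} (ψ : ∀ i, κ i → ℂ) : (∀ i, κ i) → ℂ :=
  fun a => ∏ i, ψ i (a i)

/-- Tensor positivity of a matrix on a tensor product space. -/
def TensorPos {ι : Type} [Fintype ι] [DecidableEq ι] {κ : ι → Type} [∀ i, Fintype (κ i)]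
    (Z : Matrix (∀ i, κ i) (∀ i, κ i) ℂ) : Prop :=
  ∀ ψ : ∀ i, κ i → ℂ, 0 ≤ star (tvec ψ) ⬝ᵥ Z.mulVec (tvec ψ)

/-- `C` is a covering of `Z`. -/
def IsCovering {ι : Type} [Fintype ι] [DecidableEq ι] {κ : ι → Type} [∀ i, Fintype (κ i)]
    (Z C : Matrix (∀ i, κ i) (∀ i, κ i) ℂ) : Prop :=
  TensorPos C ∧ TensorPos (C + Z) ∧ TensorPos (C - Z)

/-- The covering norm. -/
noncomputable def covNorm {ι : Type} [Fintype ι] [DecidableEq ι] {κ : ι → Type} [∀ i, Fintype (κ i)]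
    (Z : Matrix (∀ i, κ i) (∀ i, κ i) ℂ) : ℝ :=
  sInf ((fun C => (Matrix.trace C).re) '' {C | IsCovering Z C})

/-- The absolute value `√(Wᴴ W)` of a matrix. -/
noncomputable def matAbs {n : Type} [Fintype n] [DecidableEq n]
    (W : Matrix n n ℂ) : Matrix n n ℂ :=
  (Matrix.posSemidef_conjTranspose_mul_self W).1.eigenvectorUnitary.1 *
    Matrix.diagonal ((↑) ∘ Real.sqrt ∘ (Matrix.posSemidef_conjTranspose_mul_self W).1.eigenvalues) *
    (star (Matrix.posSemidef_conjTranspose_mul_self W).1.eigenvectorUnitary : Matrix n n ℂ)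

/-- The trace norm `tr √(Wᴴ W)`. -/
noncomputable def traceNorm {n : Type} [Fintype n] [DecidableEq n]
    (W : Matrix n n ℂ) : ℝ :=
  ((matAbs W).trace).re

variable {N : ℕ}

/-- In the tensor product space `⊗_n (ℂ^{d n})^{⊗ S n}`, the operator that acts as `X n` in
slot `k n` of site `n` and as the identity elsewhere. -/
def slot {d S : Fin N → ℕ} (X : ∀ n, Matrix (Fin (d n)) (Fin (d n)) ℂ) (k : ∀ n, Fin (S n)) :
    ∀ p : Σ n : Fin N, Fin (S n), Matrix (Fin (d p.1)) (Fin (d p.1)) ℂ :=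
  fun p => if p.2 = k p.1 then X p.1 else 1

/-- `T` is an `S₁ × ⋯ × S_N`-setting source operator for the state `ρ`. -/
def IsSourceOp (d S : Fin N → ℕ) (ρ : Matrix (∀ n, Fin (d n)) (∀ n, Fin (d n)) ℂ)
    (T : Matrix (∀ p : Σ n : Fin N, Fin (S n), Fin (d p.1))
          (∀ p : Σ n : Fin N, Fin (S n), Fin (d p.1)) ℂ) : Prop :=
  T.IsHermitian ∧
    ∀ (X : ∀ n, Matrix (Fin (d n)) (Fin (d n)) ℂ) (k : ∀ n, Fin (S n)),
      (T * tprod (slot X k)).trace = (ρ * tprod X).trace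

/-- A POVM with finite outcome set. -/
def IsPOVM {d : ℕ} {Λ : Type} [Fintype Λ] (M : Λ → Matrix (Fin d) (Fin d) ℂ) : Prop :=
  (∀ l, (M l).PosSemidef) ∧ ∑ l, M l = 1

/-- Joint probability distributions of a quantum correlation scenario. -/
noncomputable def quantumP {d S : Fin N → ℕ} {Λ : Fin N → Type} [∀ n, Fintype (Λ n)]
    (ρ : Matrix (∀ n, Fin (d n)) (∀ n, Fin (d n)) ℂ)
    (M : ∀ n, Fin (S n) → Λ n → Matrix (Fin (d n)) (Fin (d n)) ℂ)
    (s : ∀ n, Fin (S n)) (lam : ∀ n, Λ n) : ℝ :=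
  ((ρ * tprod (fun n => M n (s n) (lam n))).trace).re

/-- A real-valued (signed) measure on the finite set `∏_n Λ_n^{S n}` is normalized. -/
def Normalized {S : Fin N → ℕ} {Λ : Fin N → Type} [∀ n, Fintype (Λ n)] [∀ n, DecidableEq (Λ n)]
    (μ : (∀ n, Fin (S n) → Λ n) → ℝ) : Prop :=
  ∑ ω, μ ω = 1

/-- `μ` returns all joint distributions `P` of the scenario as the corresponding marginals. -/
def ReturnsMarginals {S : Fin N → ℕ} {Λ : Fin N → Type} [∀ n, Fintype (Λ n)]
    [∀ n, DecidableEq (Λ n)]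
    (μ : (∀ n, Fin (S n) → Λ n) → ℝ) (P : (∀ n, Fin (S n)) → (∀ n, Λ n) → ℝ) : Prop :=
  ∀ (s : ∀ n, Fin (S n)) (lam : ∀ n, Λ n),
    (∑ ω : ∀ n, Fin (S n) → Λ n, if (fun n => ω n (s n)) = lam then μ ω else 0) = P s lam

/-- The total variation norm of a real-valued measure on a finite set. -/
noncomputable def varNorm {S : Fin N → ℕ} {Λ : Fin N → Type} [∀ n, Fintype (Λ n)]
    [∀ n, DecidableEq (Λ n)] (μ : (∀ n, Fin (S n) → Λ n) → ℝ) : ℝ :=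
  ∑ ω, |μ ω|

/-- The parameter `γ_E`: the infimum of the total variation norms over all normalized
real-valued measures returning all joint distributions of the scenario as marginals. -/
noncomputable def gammaE {S : Fin N → ℕ} {Λ : Fin N → Type} [∀ n, Fintype (Λ n)]
    [∀ n, DecidableEq (Λ n)] (P : (∀ n, Fin (S n)) → (∀ n, Λ n) → ℝ) : ℝ :=
  sInf {t | ∃ μ, Normalized μ ∧ ReturnsMarginals μ P ∧ t = varNorm μ}

/-- Integration of a bounded function with respect to a signed measure, via the Jordan
decomposition. -/
noncomputable def signedIntegral {Ω : Type} [MeasurableSpace Ω] (ν : SignedMeasure Ω)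
    (f : Ω → ℝ) : ℝ :=
  (∫ ω, f ω ∂ν.toJordanDecomposition.posPart) - ∫ ω, f ω ∂ν.toJordanDecomposition.negPart

/-- An `S₁ × ⋯ × S_N`-setting correlation scenario with finite outcome sets admits an LHV
(local hidden variable) model. -/
def AdmitsLHVFin {S : Fin N → ℕ} {Λ : Fin N → Type} [∀ n, Fintype (Λ n)]
    (P : (∀ n, Fin (S n)) → (∀ n, Λ n) → ℝ) : Prop :=
  ∃ (Ω : Type) (_ : MeasurableSpace Ω) (ν : Measure Ω) (_ : IsProbabilityMeasure ν)
    (p : ∀ n, Fin (S n) → Ω → Λ n → ℝ),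
    (∀ n s ω l, 0 ≤ p n s ω l) ∧ (∀ n s ω, ∑ l, p n s ω l = 1) ∧
    (∀ n s l, Measurable fun ω => p n s ω l) ∧
    ∀ (s : ∀ n, Fin (S n)) (lam : ∀ n, Λ n),
      P s lam = ∫ ω, ∏ n, p n (s n) ω (lam n) ∂ν

/-- An `S₁ × ⋯ × S_N`-setting correlation scenario with finite outcome sets admits an LqHV
(local quasi hidden variable) model. -/
def AdmitsLqHVFin {S : Fin N → ℕ} {Λ : Fin N → Type} [∀ n, Fintype (Λ n)]
    (P : (∀ n, Fin (S n)) → (∀ n, Λ n) → ℝ) : Prop :=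
  ∃ (Ω : Type) (_ : MeasurableSpace Ω) (ν : SignedMeasure Ω)
    (p : ∀ n, Fin (S n) → Ω → Λ n → ℝ),
    ν Set.univ = 1 ∧
    (∀ n s ω l, 0 ≤ p n s ω l) ∧ (∀ n s ω, ∑ l, p n s ω l = 1) ∧
    (∀ n s l, Measurable fun ω => p n s ω l) ∧
    ∀ (s : ∀ n, Fin (S n)) (lam : ∀ n, Λ n),
      P s lam = signedIntegral ν fun ω => ∏ n, p n (s n) ω (lam n)

end LqHV


section Aux
open LqHV
variable {ι : Type} [Fintype ι] [DecidableEq ι] {κ : ι → Type} [∀ i, Fintype (κ i)]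
  [∀ i, DecidableEq (κ i)]

lemma LqHV.tprod_one' : LqHV.tprod (fun i => (1 : Matrix (κ i) (κ i) ℂ)) = 1 := by
  ext a b
  by_cases h : a = b
  · subst h; simp [LqHV.tprod, Matrix.one_apply]
  · obtain ⟨i, hi⟩ := Function.ne_iff.mp h
    simp only [LqHV.tprod, Matrix.one_apply, if_neg h]
    exact Finset.prod_eq_zero (Finset.mem_univ i) (by simp [hi])

lemma LqHV.sum_tprod {Λ' : ι → Type} [∀ i, Fintype (Λ' i)]
    (F : ∀ i, Λ' i → Matrix (κ i) (κ i) ℂ) :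
    ∑ ω : ∀ i, Λ' i, LqHV.tprod (fun i => F i (ω i)) = LqHV.tprod (fun i => ∑ l, F i l) := by
  ext a b
  simp only [Matrix.sum_apply, LqHV.tprod]
  exact (Fintype.prod_sum fun i l => F i l (a i) (b i)).symm

end Aux

section Aux2
open LqHV
variable {ι : Type} [Fintype ι] [DecidableEq ι] {κ : ι → Type} [∀ i, Fintype (κ i)]
  [∀ i, DecidableEq (κ i)]

open scoped MatrixOrder in
lemma LqHV.trace_mul_tprod_nonneg (T : Matrix (∀ i, κ i) (∀ i, κ i) ℂ) (hT : TensorPos T)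
    (A : ∀ i, Matrix (κ i) (κ i) ℂ) (hA : ∀ i, (A i).PosSemidef) :
    0 ≤ (T * LqHV.tprod A).trace := by
  classical
  set C : ∀ i, Matrix (κ i) (κ i) ℂ := fun i => CFC.sqrt (A i) with hCdef
  have hC : ∀ i (x y : κ i), A i x y = ∑ j, (starRingEnd ℂ) (C i j x) * C i j y := by
    intro i x y
    have h1 : C i * C i = A i := CFC.sqrt_mul_sqrt_self (A i) (hA i).nonneg
    have h2 : (C i).IsHermitian := (Matrix.nonneg_iff_posSemidef.mp (CFC.sqrt_nonneg (A i))).1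
    rw [← h1, Matrix.mul_apply]
    refine Finset.sum_congr rfl fun j _ => ?_
    congr 1
    exact (h2.apply x j).symm
  have key : (T * LqHV.tprod A).trace
      = ∑ J : ∀ i, κ i, ∑ a : ∀ i, κ i, ∑ b : ∀ i, κ i,
          T a b * ((∏ i, (starRingEnd ℂ) (C i (J i) (b i))) * ∏ i, C i (J i) (a i)) := by
    rw [Finset.sum_comm]
    simp only [Matrix.trace, Matrix.diag, Matrix.mul_apply, LqHV.tprod]
    refine Finset.sum_congr rfl fun a _ => ?_
    rw [Finset.sum_comm]
    refine Finset.sum_congr rfl fun b _ => ?_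
    rw [← Finset.mul_sum]
    congr 1
    calc ∏ i, A i (b i) (a i)
        = ∏ i, ∑ j, (starRingEnd ℂ) (C i j (b i)) * C i j (a i) := by
          exact Finset.prod_congr rfl fun i _ => by rw [hC]
      _ = ∑ J : ∀ i, κ i, ∏ i, (starRingEnd ℂ) (C i (J i) (b i)) * C i (J i) (a i) :=
          Fintype.prod_sum _
      _ = ∑ J : ∀ i, κ i, (∏ i, (starRingEnd ℂ) (C i (J i) (b i))) * ∏ i, C i (J i) (a i) := by
          exact Finset.sum_congr rfl fun J _ => Finset.prod_mul_distrib
  rw [key]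
  refine Finset.sum_nonneg fun J _ => ?_
  have h := hT (fun i => fun k => (starRingEnd ℂ) (C i (J i) k))
  have heq : star (tvec fun i k => (starRingEnd ℂ) (C i (J i) k)) ⬝ᵥ
      T.mulVec (tvec fun i k => (starRingEnd ℂ) (C i (J i) k))
      = ∑ a : ∀ i, κ i, ∑ b : ∀ i, κ i,
          T a b * ((∏ i, (starRingEnd ℂ) (C i (J i) (b i))) * ∏ i, C i (J i) (a i)) := by
    simp only [dotProduct, Matrix.mulVec, Pi.star_apply, LqHV.tvec, Finset.mul_sum]
    refine Finset.sum_congr rfl fun a _ => Finset.sum_congr rfl fun b _ => ?_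
    simp only [RCLike.star_def, map_prod, Complex.conj_conj]
    ring
  rw [← heq]
  exact h

end Aux2

open LqHV in
/-- If a state `ρ` on `ℂ^{d₁} ⊗ ⋯ ⊗ ℂ^{d_N}` possesses a tensor positive
`S₁ × ⋯ × S_N`-setting source operator, then every quantum `S₁ × ⋯ × S_N`-setting correlation
scenario on `ρ` (specified by arbitrary POVMs with finite outcome sets) admits an LHV model. -/
theorem tensorPos_source_op_implies_LHV {N : ℕ} (d S : Fin N → ℕ) (hS : ∀ n, 1 ≤ S n)
    (T : Matrix (∀ p : Σ n : Fin N, Fin (S n), Fin (d p.1))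
          (∀ p : Σ n : Fin N, Fin (S n), Fin (d p.1)) ℂ)
    (ρ : Matrix (∀ n, Fin (d n)) (∀ n, Fin (d n)) ℂ)
    (hρ : ρ.PosSemidef) (hρtr : ρ.trace = 1)
    (hT : IsSourceOp d S ρ T) (hTpos : TensorPos T)
    {Λ : Fin N → Type} [∀ n, Fintype (Λ n)] [∀ n, DecidableEq (Λ n)]
    (M : ∀ n, Fin (S n) → Λ n → Matrix (Fin (d n)) (Fin (d n)) ℂ)
    (hM : ∀ n s, IsPOVM (M n s)) :
    AdmitsLHVFin (quantumP ρ M) := by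
  classical
  -- hidden variable space
  set Ω : Type := ∀ n, Fin (S n) → Λ n with hΩ
  let e : (∀ p : Σ n : Fin N, Fin (S n), Λ p.1) ≃ Ω :=
    Equiv.piCurry fun (n : Fin N) (_ : Fin (S n)) => Λ n
  -- complex weights
  let trc : (∀ p : Σ n : Fin N, Fin (S n), Λ p.1) → ℂ :=
    fun ω' => (T * LqHV.tprod (fun p => M p.1 p.2 (ω' p))).trace
  have hpos : ∀ ω', 0 ≤ trc ω' :=
    fun ω' => LqHV.trace_mul_tprod_nonneg T hTpos _ (fun p => (hM p.1 p.2).1 (ω' p))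
  -- trace of T is 1
  have hTtr : T.trace = 1 := by
    have h := hT.2 (fun n => 1) (fun n => ⟨0, hS n⟩)
    have hslot : (slot (fun n => (1 : Matrix (Fin (d n)) (Fin (d n)) ℂ))
        (fun n => ⟨0, hS n⟩)) = fun p => 1 := by
      funext p; simp [slot]
    rw [hslot, LqHV.tprod_one', LqHV.tprod_one', mul_one, mul_one] at h
    rw [h, hρtr]
  -- total mass
  have htot : ∑ ω' : ∀ p : Σ n : Fin N, Fin (S n), Λ p.1, trc ω' = 1 := by
    have h1 : ∑ ω' : ∀ p : Σ n : Fin N, Fin (S n), Λ p.1, trc ω'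
        = (T * ∑ ω' : ∀ p : Σ n : Fin N, Fin (S n), Λ p.1,
            LqHV.tprod (fun p => M p.1 p.2 (ω' p))).trace := by
      rw [Finset.mul_sum, Matrix.trace_sum]
    rw [h1, LqHV.sum_tprod]
    have h2 : (fun p : Σ n : Fin N, Fin (S n) => ∑ l, M p.1 p.2 l)
        = fun p : Σ n : Fin N, Fin (S n) => (1 : Matrix (Fin (d p.1)) (Fin (d p.1)) ℂ) := by
      funext p; exact (hM p.1 p.2).2
    rw [h2, LqHV.tprod_one', mul_one, hTtr]
  -- marginals
  have hmarg : ∀ (s : ∀ n, Fin (S n)) (lam : ∀ n, Λ n),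
      ∑ ω' : ∀ p : Σ n : Fin N, Fin (S n), Λ p.1,
        (if (fun n => ω' ⟨n, s n⟩) = lam then trc ω' else 0)
      = (ρ * LqHV.tprod (fun n => M n (s n) (lam n))).trace := by
    intro s lam
    set Gc : ∀ p : Σ n : Fin N, Fin (S n), Λ p.1 → Matrix (Fin (d p.1)) (Fin (d p.1)) ℂ :=
      fun p l => if p.2 = s p.1 then (if l = lam p.1 then M p.1 p.2 l else 0)
        else M p.1 p.2 l with hGc
    have step1 : ∀ ω' : ∀ p : Σ n : Fin N, Fin (S n), Λ p.1,
        (if (fun n => ω' ⟨n, s n⟩) = lam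
          then LqHV.tprod (fun p => M p.1 p.2 (ω' p)) else 0)
        = LqHV.tprod (fun p => Gc p (ω' p)) := by
      intro ω'
      by_cases hc : (fun n => ω' ⟨n, s n⟩) = lam
      · rw [if_pos hc]
        have hfun : (fun p : Σ n : Fin N, Fin (S n) => Gc p (ω' p))
            = fun p : Σ n : Fin N, Fin (S n) => M p.1 p.2 (ω' p) := by
          funext p
          simp only [hGc]
          split_ifs with h1 h2
          · rfl
          · exfalso; apply h2
            have hp : p = ⟨p.1, s p.1⟩ := by rw [← h1]
            rw [hp]
            exact congrFun hc p.1
          · rfl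
        rw [hfun]
      · rw [if_neg hc]
        obtain ⟨n, hn⟩ := Function.ne_iff.mp hc
        ext a b
        simp only [LqHV.tprod, Matrix.zero_apply]
        refine (Finset.prod_eq_zero
          (Finset.mem_univ (⟨n, s n⟩ : Σ n : Fin N, Fin (S n))) ?_).symm
        simp only [hGc]
        simp [hn]
    have step2 : (fun p : Σ n : Fin N, Fin (S n) => ∑ l, Gc p l)
        = slot (fun n => M n (s n) (lam n)) s := by
      funext p
      simp only [hGc, slot]
      split_ifs with h1
      · rw [Finset.sum_ite_eq' Finset.univ (lam p.1) (fun l => M p.1 p.2 l),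
          if_pos (Finset.mem_univ _), h1]
      · exact (hM p.1 p.2).2
    calc ∑ ω' : ∀ p : Σ n : Fin N, Fin (S n), Λ p.1,
          (if (fun n => ω' ⟨n, s n⟩) = lam then trc ω' else 0)
        = ∑ ω' : ∀ p : Σ n : Fin N, Fin (S n), Λ p.1,
          (T * (if (fun n => ω' ⟨n, s n⟩) = lam
            then LqHV.tprod (fun p => M p.1 p.2 (ω' p)) else 0)).trace := by
          refine Finset.sum_congr rfl fun ω' _ => ?_
          split_ifs with h
          · rfl
          · simp
      _ = (T * ∑ ω' : ∀ p : Σ n : Fin N, Fin (S n), Λ p.1,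
            LqHV.tprod (fun p => Gc p (ω' p))).trace := by
          simp_rw [step1]
          rw [← Matrix.trace_sum, ← Finset.mul_sum]
      _ = (T * LqHV.tprod (slot (fun n => M n (s n) (lam n)) s)).trace := by
          rw [LqHV.sum_tprod, step2]
      _ = (ρ * LqHV.tprod (fun n => M n (s n) (lam n))).trace := hT.2 _ s
  -- real weights
  let μ : Ω → ℝ := fun ω => (trc (fun p => ω p.1 p.2)).re
  have hμe : ∀ ω', μ (e ω') = (trc ω').re := fun ω' => rfl
  have hμ0 : ∀ ω, 0 ≤ μ ω := fun ω => (Complex.nonneg_iff.mp (hpos _)).1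
  have hμtot : ∑ ω : Ω, μ ω = 1 := by
    rw [← Equiv.sum_comp e (fun ω => μ ω)]
    simp only [hμe]
    rw [← Complex.re_sum, htot, Complex.one_re]
  have hμmarg : ∀ (s : ∀ n, Fin (S n)) (lam : ∀ n, Λ n),
      ∑ ω : Ω, (if (fun n => ω n (s n)) = lam then μ ω else 0) = quantumP ρ M s lam := by
    intro s lam
    rw [← Equiv.sum_comp e (fun ω => if (fun n => ω n (s n)) = lam then μ ω else 0)]
    have h2 : ∑ ω' : ∀ p : Σ n : Fin N, Fin (S n), Λ p.1,
        (if (fun n => (e ω') n (s n)) = lam then μ (e ω') else 0)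
        = ∑ ω' : ∀ p : Σ n : Fin N, Fin (S n), Λ p.1,
          (if (fun n => ω' ⟨n, s n⟩) = lam then trc ω' else 0).re := by
      refine Finset.sum_congr rfl fun ω' _ => ?_
      show (if (fun n => ω' ⟨n, s n⟩) = lam then μ (e ω') else 0) = _
      by_cases h : (fun n => ω' ⟨n, s n⟩) = lam
      · rw [if_pos h, if_pos h, hμe]
      · rw [if_neg h, if_neg h, Complex.zero_re]
    rw [h2, ← Complex.re_sum, hmarg s lam]
    rfl
  -- construct the LHV model
  letI mΩ : MeasurableSpace Ω := ⊤
  haveI : MeasurableSingletonClass Ω := ⟨fun _ => trivial⟩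
  let ν : Measure Ω := ∑ ω ∈ Finset.univ, (ENNReal.ofReal (μ ω)) • Measure.dirac ω
  have hν_single : ∀ x : Ω, ν {x} = ENNReal.ofReal (μ x) := by
    intro x
    rw [show ν {x} = ∑ ω ∈ Finset.univ, ((ENNReal.ofReal (μ ω)) • Measure.dirac ω) {x} from
      Measure.finset_sum_apply _ _ _]
    simp only [Measure.smul_apply, smul_eq_mul, Measure.dirac_apply,
      Set.indicator_apply, Set.mem_singleton_iff, Pi.one_apply, mul_ite, mul_one, mul_zero]
    rw [Finset.sum_ite_eq' Finset.univ x fun ω => ENNReal.ofReal (μ ω)]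
    simp
  have hν_univ : ν Set.univ = 1 := by
    rw [show ν Set.univ = ∑ ω ∈ Finset.univ, ((ENNReal.ofReal (μ ω)) • Measure.dirac ω)
      Set.univ from Measure.finset_sum_apply _ _ _]
    simp only [Measure.smul_apply, smul_eq_mul, Measure.dirac_apply, Set.indicator_univ,
      Pi.one_apply, mul_one]
    rw [← ENNReal.ofReal_sum_of_nonneg fun ω _ => hμ0 ω, hμtot, ENNReal.ofReal_one]
  haveI hProb : IsProbabilityMeasure ν := ⟨hν_univ⟩
  refine ⟨Ω, mΩ, ν, hProb, fun n s ω l => if ω n s = l then 1 else 0,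
    fun n s ω l => by positivity, fun n s ω => by simp, fun n s l => fun _ _ => trivial,
    ?_⟩
  intro s lam
  rw [MeasureTheory.integral_fintype (Integrable.of_finite)]
  have hprod : ∀ x : Ω, (∏ n, if x n (s n) = lam n then (1 : ℝ) else 0)
      = if (fun n => x n (s n)) = lam then 1 else 0 := by
    intro x
    by_cases h : (fun n => x n (s n)) = lam
    · rw [if_pos h]
      refine Finset.prod_eq_one fun n _ => if_pos (congrFun h n)
    · rw [if_neg h]
      obtain ⟨n, hn⟩ := Function.ne_iff.mp h
      exact Finset.prod_eq_zero (Finset.mem_univ n) (if_neg hn)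
  calc quantumP ρ M s lam
      = ∑ x : Ω, (if (fun n => x n (s n)) = lam then μ x else 0) := (hμmarg s lam).symm
    _ = ∑ x : Ω, (ν {x}).toReal • (∏ n, if x n (s n) = lam n then (1 : ℝ) else 0) := by
        refine Finset.sum_congr rfl fun x _ => ?_
        rw [hprod x, hν_single x, ENNReal.toReal_ofReal (hμ0 x), smul_eq_mul,
          mul_ite, mul_one, mul_zero]
end

section
/- Let T be an S₁×⋯×S_N-setting source operator for a state ρ on ℂ^{d₁}⊗⋯⊗ℂ^{d_N}, and let M_n^{(s_n)} be POVMs on ℂ^{d_n} with finite outcome sets Λ_n. Then the real-valued function μ_T on Λ₁^{S₁}×⋯×Λ_N^{S_N} defined by μ_T(λ₁^{(1)},…,λ₁^{(S₁)},…,λ_N^{(1)},…,λ_N^{(S_N)}) = tr[T (M₁^{(1)}(λ₁^{(1)})⊗⋯⊗M₁^{(S₁)}(λ₁^{(S₁)})⊗⋯⊗M_N^{(1)}(λ_N^{(1)})⊗⋯⊗M_N^{(S_N)}(λ_N^{(S_N)}))] is real, normalized, returns all joint distributions P_{(s₁,…,s_N)}(λ₁,…,λ_N) = tr[ρ (M₁^{(s₁)}(λ₁)⊗⋯⊗M_N^{(s_N)}(λ_N))]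 of the quantum scenario as marginals, and satisfies 1 ≤ ‖μ_T‖_var ≤ ‖T‖_cov. -/
open scoped ComplexOrder Matrix
open MeasureTheory ProbabilityTheory

namespace LqHV

/-- The real-valued measure `μ_T` on `Λ₁^{S₁} × ⋯ × Λ_N^{S_N}` induced by a source operator
`T` and the POVMs `M`:
`μ_T(ω) = tr[T (M₁^{(1)}(ω₁^{(1)}) ⊗ ⋯ ⊗ M_N^{(S_N)}(ω_N^{(S_N)}))]`. -/
noncomputable def muT {N : ℕ} {d S : Fin N → ℕ} {Λ : Fin N → Type} [∀ n, Fintype (Λ n)]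
    (T : Matrix (∀ p : Σ n : Fin N, Fin (S n), Fin (d p.1))
          (∀ p : Σ n : Fin N, Fin (S n), Fin (d p.1)) ℂ)
    (M : ∀ n, Fin (S n) → Λ n → Matrix (Fin (d n)) (Fin (d n)) ℂ)
    (ω : ∀ n, Fin (S n) → Λ n) : ℝ :=
  ((T * tprod fun p : Σ n : Fin N, Fin (S n) => M p.1 p.2 (ω p.1 p.2)).trace).re

end LqHV

namespace LqHV

section Aux

variable {ι : Type} [Fintype ι] [DecidableEq ι] {κ : ι → Type} [∀ i, Fintype (κ i)]

lemma tprod_conjTranspose (X : ∀ i, Matrix (κ i) (κ i) ℂ) :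
    (tprod X)ᴴ = tprod fun i => (X i)ᴴ := by
  ext a b
  simp [tprod, Matrix.conjTranspose_apply, map_prod]

lemma tprod_one [∀ i, DecidableEq (κ i)] :
    tprod (fun i => (1 : Matrix (κ i) (κ i) ℂ)) = 1 := by
  classical
  ext a b
  by_cases h : a = b
  · subst h
    simp [tprod, Matrix.one_apply]
  · obtain ⟨i, hi⟩ := Function.ne_iff.mp h
    rw [Matrix.one_apply_ne h]
    exact Finset.prod_eq_zero (Finset.mem_univ i) (Matrix.one_apply_ne hi)

lemma sum_tprod_s14 {κ' : ι → Type} [∀ i, Fintype (κ' i)]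
    (G : ∀ i, κ' i → Matrix (κ i) (κ i) ℂ) :
    ∑ f : ∀ i, κ' i, tprod (fun i => G i (f i)) = tprod fun i => ∑ l, G i l := by
  ext a b
  rw [Matrix.sum_apply]
  simp only [tprod, Matrix.sum_apply]
  rw [Fintype.prod_sum]

lemma trace_mul_vecMulVec {n : Type} [Fintype n] (Z : Matrix n n ℂ) (v w : n → ℂ) :
    (Z * Matrix.vecMulVec v w).trace = w ⬝ᵥ Z.mulVec v := by
  simp only [Matrix.trace, Matrix.diag, Matrix.mul_apply, Matrix.vecMulVec_apply,
    dotProduct, Matrix.mulVec, Finset.mul_sum]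
  exact Finset.sum_congr rfl fun x _ => Finset.sum_congr rfl fun y _ => by ring

lemma tensorPos_of_posSemidef {Z : Matrix (∀ i, κ i) (∀ i, κ i) ℂ}
    (hZ : Z.PosSemidef) : TensorPos Z := fun ψ => hZ.dotProduct_mulVec_nonneg (tvec ψ)

lemma trace_mul_tprod_nonneg_s14 {Z : Matrix (∀ i, κ i) (∀ i, κ i) ℂ} (hZ : TensorPos Z)
    {A : ∀ i, Matrix (κ i) (κ i) ℂ} (hA : ∀ i, (A i).PosSemidef) :
    0 ≤ (Z * tprod A).trace := by
  classical
  have h' : ∀ i, ∃ B : Matrix (κ i) (κ i) ℂ, A i = B * Bᴴ := fun i => by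
    open scoped MatrixOrder in
    obtain ⟨B, hB⟩ := CStarAlgebra.nonneg_iff_eq_star_mul_self.mp (hA i).nonneg
    exact ⟨Bᴴ, by simpa [Matrix.star_eq_conjTranspose] using hB⟩
  choose B hB using h'
  have hW : tprod A = ∑ J : ∀ i, κ i,
      Matrix.vecMulVec (tvec fun i z => B i z (J i)) (star (tvec fun i z => B i z (J i))) := by
    ext y x
    rw [Matrix.sum_apply]
    have h1 : ∀ i, A i (y i) (x i) = ∑ j, B i (y i) j * star (B i (x i) j) := by
      intro i
      rw [hB i]
      simp [Matrix.mul_apply, Matrix.conjTranspose_apply]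
    simp only [tprod, h1]
    rw [Fintype.prod_sum]
    refine Finset.sum_congr rfl fun J _ => ?_
    rw [Matrix.vecMulVec_apply, Finset.prod_mul_distrib]
    simp [tvec]
  rw [hW, Matrix.mul_sum, Matrix.trace_sum]
  refine Finset.sum_nonneg fun J _ => ?_
  rw [trace_mul_vecMulVec]
  exact hZ _

end Aux

end LqHV

open LqHV in
/-- **Lemma 4.** For a source operator `T` for `ρ` and POVMs `M`, the function `μ_T` is
real-valued, normalized, returns all joint distributions of the quantum scenario as
marginals, and satisfies `1 ≤ ‖μ_T‖_var ≤ ‖T‖_cov`. -/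
theorem muT_properties {N : ℕ} (d S : Fin N → ℕ) (hS : ∀ n, 1 ≤ S n)
    {Λ : Fin N → Type} [∀ n, Fintype (Λ n)] [∀ n, DecidableEq (Λ n)]
    (ρ : Matrix (∀ n, Fin (d n)) (∀ n, Fin (d n)) ℂ)
    (hρ : ρ.PosSemidef) (hρtr : ρ.trace = 1)
    (T : Matrix (∀ p : Σ n : Fin N, Fin (S n), Fin (d p.1))
          (∀ p : Σ n : Fin N, Fin (S n), Fin (d p.1)) ℂ)
    (hT : IsSourceOp d S ρ T)
    (M : ∀ n, Fin (S n) → Λ n → Matrix (Fin (d n)) (Fin (d n)) ℂ)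
    (hM : ∀ n s, IsPOVM (M n s)) :
    (∀ ω : ∀ n, Fin (S n) → Λ n,
        ((T * tprod fun p : Σ n : Fin N, Fin (S n) => M p.1 p.2 (ω p.1 p.2)).trace).im = 0) ∧
      Normalized (muT T M) ∧
      ReturnsMarginals (muT T M) (quantumP ρ M) ∧
      1 ≤ varNorm (muT T M) ∧ varNorm (muT T M) ≤ covNorm T := by
  classical
  obtain ⟨hHerm, hsrc⟩ := hT
  set e : (∀ p : Σ n : Fin N, Fin (S n), Λ p.1) ≃ (∀ n, Fin (S n) → Λ n) :=
    Equiv.piCurry fun (n : Fin N) (_ : Fin (S n)) => Λ n with he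
  have hsum : ∀ F : ∀ p : Σ n : Fin N, Fin (S n), Λ p.1 → Matrix (Fin (d p.1)) (Fin (d p.1)) ℂ,
      (∑ ω : ∀ n, Fin (S n) → Λ n, tprod (fun p => F p (ω p.1 p.2)))
        = tprod fun p => ∑ l, F p l := by
    intro F
    rw [← Equiv.sum_comp e (fun ω => tprod fun p : Σ n : Fin N, Fin (S n) => F p (ω p.1 p.2))]
    exact sum_tprod_s14 F
  have hone : (∑ ω : ∀ n, Fin (S n) → Λ n,
      tprod fun p : Σ n : Fin N, Fin (S n) => M p.1 p.2 (ω p.1 p.2)) = 1 := by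
    rw [hsum (fun p l => M p.1 p.2 l)]
    rw [show (fun p : Σ n : Fin N, Fin (S n) => ∑ l, M p.1 p.2 l)
        = fun p : Σ n : Fin N, Fin (S n) => (1 : Matrix (Fin (d p.1)) (Fin (d p.1)) ℂ) from
      funext fun p => (hM p.1 p.2).2]
    exact tprod_one
  have htrT : T.trace = 1 := by
    have h := hsrc (fun n => 1) (fun n => ⟨0, hS n⟩)
    have h1 : tprod (slot (fun n => (1 : Matrix (Fin (d n)) (Fin (d n)) ℂ))
        (fun n => ⟨0, hS n⟩)) = 1 := by
      rw [show slot (fun n => (1 : Matrix (Fin (d n)) (Fin (d n)) ℂ)) (fun n => ⟨0, hS n⟩)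
          = fun p : Σ n : Fin N, Fin (S n) => (1 : Matrix (Fin (d p.1)) (Fin (d p.1)) ℂ) from
        funext fun p => by simp [slot]]
      exact tprod_one
    have h2 : tprod (fun n => (1 : Matrix (Fin (d n)) (Fin (d n)) ℂ)) = 1 := tprod_one
    rw [h1, h2, mul_one, mul_one] at h
    rw [h, hρtr]
  have hnorm : Normalized (muT T M) := by
    show (∑ ω : ∀ n, Fin (S n) → Λ n,
      ((T * tprod fun p : Σ n : Fin N, Fin (S n) => M p.1 p.2 (ω p.1 p.2)).trace).re) = 1
    rw [← Complex.re_sum, ← Matrix.trace_sum, ← Matrix.mul_sum, hone, mul_one, htrT]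
    simp
  have him : ∀ ω : ∀ n, Fin (S n) → Λ n,
      ((T * tprod fun p : Σ n : Fin N, Fin (S n) => M p.1 p.2 (ω p.1 p.2)).trace).im = 0 := by
    intro ω
    have hHermP : (tprod fun p : Σ n : Fin N, Fin (S n) => M p.1 p.2 (ω p.1 p.2)).IsHermitian := by
      show _ᴴ = _
      rw [tprod_conjTranspose]
      exact congrArg _ (funext fun p => ((hM p.1 p.2).1 _).1)
    have hst : star ((T * tprod fun p : Σ n : Fin N, Fin (S n) =>
        M p.1 p.2 (ω p.1 p.2)).trace)
        = (T * tprod fun p : Σ n : Fin N, Fin (S n) => M p.1 p.2 (ω p.1 p.2)).trace := by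
      rw [← Matrix.trace_conjTranspose, Matrix.conjTranspose_mul, hHermP.eq, hHerm.eq,
        Matrix.trace_mul_comm]
    have h' : -((T * tprod fun p : Σ n : Fin N, Fin (S n) =>
        M p.1 p.2 (ω p.1 p.2)).trace).im
        = ((T * tprod fun p : Σ n : Fin N, Fin (S n) => M p.1 p.2 (ω p.1 p.2)).trace).im := by
      simpa [Complex.ext_iff] using hst
    linarith
  have hmarg : ReturnsMarginals (muT T M) (quantumP ρ M) := by
    intro s lam
    set X : ∀ n, Matrix (Fin (d n)) (Fin (d n)) ℂ := fun n => M n (s n) (lam n) with hX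
    set F : ∀ p : Σ n : Fin N, Fin (S n), Λ p.1 → Matrix (Fin (d p.1)) (Fin (d p.1)) ℂ :=
      fun p l => if p.2 = s p.1 then (if l = lam p.1 then M p.1 p.2 l else 0)
        else M p.1 p.2 l with hF
    have hF1 : ∀ ω : ∀ n, Fin (S n) → Λ n,
        tprod (fun p : Σ n : Fin N, Fin (S n) => F p (ω p.1 p.2)) =
          if (fun n => ω n (s n)) = lam
          then tprod (fun p : Σ n : Fin N, Fin (S n) => M p.1 p.2 (ω p.1 p.2)) else 0 := by
      intro ω
      by_cases h : (fun n => ω n (s n)) = lam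
      · rw [if_pos h]
        refine congrArg _ (funext fun p => ?_)
        by_cases hp : p.2 = s p.1
        · have hω : ω p.1 p.2 = lam p.1 := by
            rw [hp]; exact congrFun h p.1
          simp only [hF]
          rw [if_pos hp, if_pos hω]
        · simp [hF, hp]
      · rw [if_neg h]
        obtain ⟨n, hn⟩ := Function.ne_iff.mp h
        ext a b
        rw [Matrix.zero_apply]
        show (∏ p : Σ n : Fin N, Fin (S n), F p (ω p.1 p.2) (a p) (b p)) = 0
        refine Finset.prod_eq_zero (Finset.mem_univ (⟨n, s n⟩ : Σ n : Fin N, Fin (S n))) ?_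
        simp [hF, hn]
    have hF2 : (fun p : Σ n : Fin N, Fin (S n) => ∑ l, F p l) = slot X s := by
      funext p
      by_cases hp : p.2 = s p.1
      · rw [show slot X s p = X p.1 from if_pos hp]
        simp only [hF, if_pos hp]
        rw [Finset.sum_ite_eq' Finset.univ (lam p.1) (M p.1 p.2)]
        rw [if_pos (Finset.mem_univ _), hX, hp]
      · rw [show slot X s p = 1 from if_neg hp]
        simp only [hF, if_neg hp]
        exact (hM p.1 p.2).2
    calc (∑ ω : ∀ n, Fin (S n) → Λ n,
          if (fun n => ω n (s n)) = lam then muT T M ω else 0)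
        = ∑ ω : ∀ n, Fin (S n) → Λ n,
            ((T * tprod fun p : Σ n : Fin N, Fin (S n) => F p (ω p.1 p.2)).trace).re := by
          refine Finset.sum_congr rfl fun ω _ => ?_
          rw [hF1 ω]
          by_cases h : (fun n => ω n (s n)) = lam
          · rw [if_pos h, if_pos h]; rfl
          · rw [if_neg h, if_neg h]; simp
      _ = ((T * tprod (slot X s)).trace).re := by
          rw [← Complex.re_sum, ← Matrix.trace_sum, ← Matrix.mul_sum, hsum F, hF2]
      _ = quantumP ρ M s lam := by rw [hsrc X s]; rfl
  have h1le : 1 ≤ varNorm (muT T M) := by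
    have hn := hnorm
    unfold Normalized at hn
    calc (1:ℝ) = |∑ ω, muT T M ω| := by rw [hn]; norm_num
      _ ≤ ∑ ω, |muT T M ω| := Finset.abs_sum_le_sum_abs _ _
  refine ⟨him, hnorm, hmarg, h1le, ?_⟩
  have hub : ∀ C, IsCovering T C → varNorm (muT T M) ≤ (C.trace).re := by
    intro C hC
    have hbound : ∀ ω : ∀ n, Fin (S n) → Λ n, |muT T M ω| ≤
        ((C * tprod fun p : Σ n : Fin N, Fin (S n) => M p.1 p.2 (ω p.1 p.2)).trace).re := by
      intro ω
      have hApsd : ∀ p : Σ n : Fin N, Fin (S n), (M p.1 p.2 (ω p.1 p.2)).PosSemidef :=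
        fun p => (hM p.1 p.2).1 _
      have h1 := trace_mul_tprod_nonneg_s14 hC.2.1 hApsd
      have h2 := trace_mul_tprod_nonneg_s14 hC.2.2 hApsd
      rw [Matrix.add_mul, Matrix.trace_add] at h1
      rw [Matrix.sub_mul, Matrix.trace_sub] at h2
      have h1' := (Complex.le_def.mp h1).1
      have h2' := (Complex.le_def.mp h2).1
      simp only [Complex.zero_re, Complex.add_re, Complex.sub_re] at h1' h2'
      exact abs_le.mpr ⟨by unfold muT; linarith, by unfold muT; linarith⟩
    calc varNorm (muT T M)
        ≤ ∑ ω : ∀ n, Fin (S n) → Λ n,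
            ((C * tprod fun p : Σ n : Fin N, Fin (S n) => M p.1 p.2 (ω p.1 p.2)).trace).re :=
          Finset.sum_le_sum fun ω _ => hbound ω
      _ = (C.trace).re := by
          rw [← Complex.re_sum, ← Matrix.trace_sum, ← Matrix.mul_sum, hone, mul_one]
  obtain ⟨C₀, hC₀⟩ : ∃ C, IsCovering T C := by
    set V : Matrix (∀ p : Σ n : Fin N, Fin (S n), Fin (d p.1))
        (∀ p : Σ n : Fin N, Fin (S n), Fin (d p.1)) ℂ :=
      (hHerm.eigenvectorUnitary : Matrix (∀ p : Σ n : Fin N, Fin (S n), Fin (d p.1))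
        (∀ p : Σ n : Fin N, Fin (S n), Fin (d p.1)) ℂ) with hV
    have hsplit : T = V * Matrix.diagonal (fun i => ((hHerm.eigenvalues i : ℝ) : ℂ)) * Vᴴ := by
      simpa [hV, Function.comp_def, Matrix.star_eq_conjTranspose] using hHerm.spectral_theorem
    have hpsd : ∀ g : (∀ p : Σ n : Fin N, Fin (S n), Fin (d p.1)) → ℝ, (∀ i, 0 ≤ g i) →
        (V * Matrix.diagonal (fun i => ((g i : ℝ) : ℂ)) * Vᴴ).PosSemidef := by
      intro g hg
      exact (Matrix.posSemidef_diagonal_iff.mpr fun i =>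
        Complex.zero_le_real.mpr (hg i)).mul_mul_conjTranspose_same V
    refine ⟨V * Matrix.diagonal (fun i => ((|hHerm.eigenvalues i| : ℝ) : ℂ)) * Vᴴ,
      tensorPos_of_posSemidef (hpsd _ fun i => abs_nonneg _), ?_, ?_⟩
    · have heq : V * Matrix.diagonal (fun i => ((|hHerm.eigenvalues i| : ℝ) : ℂ)) * Vᴴ + T
          = V * Matrix.diagonal
              (fun i => ((|hHerm.eigenvalues i| + hHerm.eigenvalues i : ℝ) : ℂ)) * Vᴴ := by
        rw [show (fun i => ((|hHerm.eigenvalues i| + hHerm.eigenvalues i : ℝ) : ℂ))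
            = fun i => ((|hHerm.eigenvalues i| : ℝ) : ℂ)
              + ((hHerm.eigenvalues i : ℝ) : ℂ) from
          funext fun i => by push_cast; ring]
        rw [← Matrix.diagonal_add, Matrix.mul_add, Matrix.add_mul, ← hsplit]
      rw [heq]
      exact tensorPos_of_posSemidef (hpsd _ fun i => by
        have := neg_abs_le (hHerm.eigenvalues i); linarith)
    · have heq : V * Matrix.diagonal (fun i => ((|hHerm.eigenvalues i| : ℝ) : ℂ)) * Vᴴ - T
          = V * Matrix.diagonal
              (fun i => ((|hHerm.eigenvalues i| - hHerm.eigenvalues i : ℝ) : ℂ)) * Vᴴ := by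
        rw [show (fun i => ((|hHerm.eigenvalues i| - hHerm.eigenvalues i : ℝ) : ℂ))
            = fun i => ((|hHerm.eigenvalues i| : ℝ) : ℂ)
              - ((hHerm.eigenvalues i : ℝ) : ℂ) from
          funext fun i => by push_cast; ring]
        rw [← Matrix.diagonal_sub, Matrix.mul_sub, Matrix.sub_mul, ← hsplit]
      rw [heq]
      exact tensorPos_of_posSemidef (hpsd _ fun i => by
        have := le_abs_self (hHerm.eigenvalues i); linarith)
  refine le_csInf ⟨(C₀.trace).re, ⟨C₀, hC₀, rfl⟩⟩ ?_
  rintro t ⟨C, hC, rfl⟩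
  exact hub C hC
end
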